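/- arXiv:0803.1749 — 5 statements merged into one kernel-verified Lean document; each statement's English description precedes it below -/
import Mathlib

section
/- Let {B_n} be a μ-Cauchy sequence in Ω. Then there exists a strictly increasing function f : ℕ → ℕ with f(n) > n for all n such that lim_{n→∞} μ*(B_n △ limsup_k B_{f(k)}) = 0. In particular, every μ-Cauchy sequence in Ω converges, in the pseudometric d(A,B) = μ*(A △ B), to a subset of X. -/
open Filter Set Topology
open scoped symmDiff ENNReal

/-- `Ω` is an algebra of sets on `X`: it contains `∅` and is closed under
complements and finite unions. -/
def IsSetAlgebraOn {X : Type*} (Ω : Set (Set X)) : Prop :=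
  ∅ ∈ Ω ∧ (∀ A ∈ Ω, Aᶜ ∈ Ω) ∧ (∀ A ∈ Ω, ∀ B ∈ Ω, A ∪ B ∈ Ω)

/-- `μ` is a countably additive measure on the algebra `Ω`. -/
def IsCountablyAdditiveOn {X : Type*} (Ω : Set (Set X)) (μ : Set X → ℝ≥0∞) : Prop :=
  μ ∅ = 0 ∧ ∀ A : ℕ → Set X, (∀ i, A i ∈ Ω) → Pairwise (Function.onFun Disjoint A) →
    (⋃ i, A i) ∈ Ω → μ (⋃ i, A i) = ∑' i, μ (A i)

/-- The outer measure induced by `μ`: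
`μ*(A) = inf { ∑ μ(Cᵢ) : A ⊆ ⋃ᵢ Cᵢ, Cᵢ ∈ Ω }`. -/
noncomputable def muStar {X : Type*} (Ω : Set (Set X)) (μ : Set X → ℝ≥0∞)
    (A : Set X) : ℝ≥0∞ :=
  ⨅ (C : ℕ → Set X) (_ : ∀ i, C i ∈ Ω) (_ : A ⊆ ⋃ i, C i), ∑' i, μ (C i)

/-- A `μ`-Cauchy sequence in `Ω`: a sequence of members of `Ω` with
`μ(B n ∆ B m) → 0` as `n, m → ∞`. -/
def MuCauchy {X : Type*} (Ω : Set (Set X)) (μ : Set X → ℝ≥0∞) (B : ℕ → Set X) : Prop :=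
  (∀ n, B n ∈ Ω) ∧ Tendsto (fun p : ℕ × ℕ => μ (B p.1 ∆ B p.2)) atTop (𝓝 0)

/-- `S̃`: the collection of subsets of `X` that are limits (in the pseudometric
`d(A,B) = μ*(A ∆ B)`) of `μ`-Cauchy sequences from `Ω`. -/
def Stilde {X : Type*} (Ω : Set (Set X)) (μ : Set X → ℝ≥0∞) : Set (Set X) :=
  {S | ∃ B : ℕ → Set X, MuCauchy Ω μ B ∧
    Tendsto (fun n => muStar Ω μ (B n ∆ S)) atTop (𝓝 0)}

lemma symmDiff_mem_of_isSetAlgebraOn {X : Type*} {Ω : Set (Set X)}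
    (hΩ : IsSetAlgebraOn Ω) {A B : Set X} (hA : A ∈ Ω) (hB : B ∈ Ω) : A ∆ B ∈ Ω := by
  obtain ⟨h0, hc, hu⟩ := hΩ
  have hinter : ∀ A ∈ Ω, ∀ B ∈ Ω, A ∩ B ∈ Ω := by
    intro A hA B hB
    have := hc _ (hu _ (hc _ hA) _ (hc _ hB))
    simpa [Set.compl_union, compl_compl] using this
  have hd : ∀ A ∈ Ω, ∀ B ∈ Ω, A \ B ∈ Ω := by
    intro A hA B hB
    simpa [Set.diff_eq] using hinter A hA Bᶜ (hc _ hB)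
  rw [Set.symmDiff_def]
  exact hu _ (hd A hA B hB) _ (hd B hB A hA)

lemma muStar_le_tsum {X : Type*} (Ω : Set (Set X)) (μ : Set X → ℝ≥0∞) {A : Set X}
    (C : ℕ → Set X) (hC : ∀ i, C i ∈ Ω) (hsub : A ⊆ ⋃ i, C i) :
    muStar Ω μ A ≤ ∑' i, μ (C i) :=
  iInf_le_of_le C (iInf_le_of_le hC (iInf_le _ hsub))

/-- Telescoping: the symmetric difference of two terms is contained in the union of
consecutive symmetric differences. -/
lemma symmDiff_subset_biUnion {X : Type*} (D : ℕ → Set X) {a b : ℕ} (hab : a ≤ b) :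
    D a ∆ D b ⊆ ⋃ j ∈ Set.Ico a b, D j ∆ D (j + 1) := by
  induction b, hab using Nat.le_induction with
  | base => simp
  | succ b hab ih =>
    intro x hx
    by_cases h : x ∈ D a ∆ D b
    · obtain ⟨j, hj, hxj⟩ := by simpa using ih h
      simp only [Set.mem_iUnion, Set.mem_Ico]
      exact ⟨j, ⟨hj.1, hj.2.trans (Nat.lt_succ_self b)⟩, hxj⟩
    · have hxb : x ∈ D b ∆ D (b + 1) := by
        simp only [Set.mem_symmDiff] at hx h ⊢
        tauto
      simp only [Set.mem_iUnion, Set.mem_Ico]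
      exact ⟨b, ⟨hab, Nat.lt_succ_self b⟩, hxb⟩


/-- Prepend a set to a sequence of sets. -/
def consSeq {X : Type*} (A : Set X) (D : ℕ → Set X) : ℕ → Set X
  | 0 => A
  | (j + 1) => D j

@[simp] lemma consSeq_zero {X : Type*} (A : Set X) (D : ℕ → Set X) : consSeq A D 0 = A := rfl
@[simp] lemma consSeq_succ {X : Type*} (A : Set X) (D : ℕ → Set X) (j : ℕ) :
    consSeq A D (j + 1) = D j := rfl

set_option maxHeartbeats 1000000 in
/-- every μ-Cauchy sequence in Ω has a subsequence whose limsup is a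
limit of the sequence in the pseudometric `d(A,B) = μ*(A ∆ B)`; in particular every
μ-Cauchy sequence converges to some subset of `X`. -/
theorem stmt0 {X : Type*} (Ω : Set (Set X)) (μ : Set X → ℝ≥0∞)
    (hΩ : IsSetAlgebraOn Ω) (hμ : IsCountablyAdditiveOn Ω μ) (hfin : μ Set.univ ≠ ⊤)
    (B : ℕ → Set X) (hB : MuCauchy Ω μ B) :
    (∃ f : ℕ → ℕ, StrictMono f ∧ (∀ n, n < f n) ∧
      Tendsto (fun n => muStar Ω μ (B n ∆ ⋂ m, ⋃ k, ⋃ (_ : m ≤ k), B (f k)))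
        atTop (𝓝 0)) ∧
    ∃ S : Set X, Tendsto (fun n => muStar Ω μ (B n ∆ S)) atTop (𝓝 0) := by
  obtain ⟨hBΩ, hCauchy⟩ := hB
  -- choose N n such that symmetric differences past N n have measure < (1/2)^n
  have hN : ∀ n : ℕ, ∃ N : ℕ, ∀ p q : ℕ, N ≤ p → N ≤ q →
      μ (B p ∆ B q) < (2 : ℝ≥0∞)⁻¹ ^ n := by
    intro n
    have hpos : (0 : ℝ≥0∞) < 2⁻¹ ^ n := ENNReal.pow_pos (ENNReal.inv_pos.2 (by norm_num)) n
    have hev : ∀ᶠ p : ℕ × ℕ in atTop, μ (B p.1 ∆ B p.2) < 2⁻¹ ^ n :=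
      hCauchy (Iio_mem_nhds hpos)
    obtain ⟨a, ha⟩ := eventually_atTop.1 hev
    exact ⟨max a.1 a.2, fun p q hp hq =>
      ha (p, q) ⟨le_trans (le_max_left _ _) hp, le_trans (le_max_right _ _) hq⟩⟩
  choose N hNspec using hN
  -- build the subsequence
  set f : ℕ → ℕ := fun n =>
    Nat.rec (N 0 + 1) (fun n fn => max (N (n + 1)) (max fn (n + 1)) + 1) n with hf
  have hf0 : f 0 = N 0 + 1 := rfl
  have hfsucc : ∀ n, f (n + 1) = max (N (n + 1)) (max (f n) (n + 1)) + 1 := fun n => rfl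
  have hmono : StrictMono f := by
    apply strictMono_nat_of_lt_succ
    intro n
    rw [hfsucc]
    exact lt_of_le_of_lt (le_max_left _ _) (Nat.lt_succ_of_le (le_max_right _ _))
  have hgt : ∀ n, n < f n := by
    intro n
    cases n with
    | zero => rw [hf0]; exact Nat.succ_pos _
    | succ m =>
      rw [hfsucc]
      exact Nat.lt_succ_of_le (le_max_of_le_right (le_max_right _ _))
  have hfN : ∀ n, N n ≤ f n := by
    intro n
    cases n with
    | zero => rw [hf0]; exact Nat.le_succ _
    | succ m => rw [hfsucc]; exact le_trans (le_max_left _ _) (Nat.le_succ _)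
  have hconsec : ∀ j, μ (B (f j) ∆ B (f (j + 1))) < 2⁻¹ ^ j := fun j =>
    hNspec j _ _ (hfN j) (le_trans (hfN j) (hmono (Nat.lt_succ_self j)).le)
  set S : Set X := ⋂ m, ⋃ k, ⋃ (_ : m ≤ k), B (f k) with hS
  -- key bound
  have key : ∀ n, muStar Ω μ (B n ∆ S) ≤ μ (B n ∆ B (f n)) + 2⁻¹ ^ n * 2 := by
    intro n
    set C : ℕ → Set X :=
      consSeq (B n ∆ B (f n)) (fun j => B (f (n + j)) ∆ B (f (n + j + 1))) with hC
    have hC0 : C 0 = B n ∆ B (f n) := rfl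
    have hCsucc : ∀ j, C (j + 1) = B (f (n + j)) ∆ B (f (n + j + 1)) := fun j => rfl
    have hCmem : ∀ j, C j ∈ Ω := by
      intro j
      cases j with
      | zero => exact symmDiff_mem_of_isSetAlgebraOn hΩ (hBΩ n) (hBΩ (f n))
      | succ j => exact symmDiff_mem_of_isSetAlgebraOn hΩ (hBΩ _) (hBΩ _)
    -- the covering
    have hcover : B n ∆ S ⊆ ⋃ j, C j := by
      have hsub2 : B (f n) ∆ S ⊆ ⋃ j, C (j + 1) := by
        intro x hx
        have main : ∀ k, n ≤ k → x ∈ B (f n) ∆ B (f k) → x ∈ ⋃ j, C (j + 1) := by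
          intro k hk hxk
          obtain ⟨j, hj, hxj⟩ := by
            simpa using symmDiff_subset_biUnion (fun i => B (f i)) hk hxk
          refine Set.mem_iUnion.2 ⟨j - n, ?_⟩
          rw [hCsucc]
          have h1 : n + (j - n) = j := Nat.add_sub_cancel' hj.1
          rw [h1]
          exact hxj
        rcases Set.mem_symmDiff.1 hx with ⟨hx1, hx2⟩ | ⟨hx1, hx2⟩
        · -- x ∈ B (f n), x ∉ S
          have : ∃ m, ∀ k, m ≤ k → x ∉ B (f k) := by
            simpa [hS, Set.mem_iInter, Set.mem_iUnion, not_exists] using hx2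
          obtain ⟨m, hm⟩ := this
          refine main (max m n) (le_max_right _ _) ?_
          exact Set.mem_symmDiff.2 (Or.inl ⟨hx1, hm _ (le_max_left _ _)⟩)
        · -- x ∈ S, x ∉ B (f n)
          have : ∃ k, n ≤ k ∧ x ∈ B (f k) := by
            have := Set.mem_iInter.1 hx1 n
            simpa [Set.mem_iUnion] using this
          obtain ⟨k, hk, hxk⟩ := this
          exact main k hk (Set.mem_symmDiff.2 (Or.inr ⟨hxk, hx2⟩))
      intro x hx
      have hx' : x ∈ (B n ∆ B (f n)) ∪ (B (f n) ∆ S) :=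
        symmDiff_triangle (B n) (B (f n)) S hx
      rcases hx' with h | h
      · exact Set.mem_iUnion.2 ⟨0, h⟩
      · obtain ⟨j, hj⟩ := Set.mem_iUnion.1 (hsub2 h)
        exact Set.mem_iUnion.2 ⟨j + 1, hj⟩
    calc muStar Ω μ (B n ∆ S) ≤ ∑' j, μ (C j) := muStar_le_tsum Ω μ C hCmem hcover
      _ = μ (C 0) + ∑' j, μ (C (j + 1)) := tsum_eq_zero_add' ENNReal.summable
      _ ≤ μ (B n ∆ B (f n)) + 2⁻¹ ^ n * 2 := by
          gcongr
          · rw [hC0]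
          · calc ∑' j, μ (C (j + 1)) ≤ ∑' j : ℕ, (2 : ℝ≥0∞)⁻¹ ^ (n + j) := by
                  refine ENNReal.tsum_le_tsum fun j => ?_
                  rw [hCsucc]
                  exact (hconsec (n + j)).le
              _ = 2⁻¹ ^ n * 2 := by
                  simp_rw [pow_add]
                  rw [ENNReal.tsum_mul_left, ENNReal.tsum_geometric]
                  congr 1
                  rw [show (1 : ℝ≥0∞) - 2⁻¹ = 2⁻¹ by
                    rw [ENNReal.sub_eq_of_eq_add (by norm_num)]
                    rw [ENNReal.inv_two_add_inv_two]]
                  simp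
      -- end
  -- tendsto statements
  have h1 : Tendsto (fun n => μ (B n ∆ B (f n))) atTop (𝓝 0) := by
    have hpair : Tendsto (fun n => ((n : ℕ), f n)) atTop (atTop : Filter (ℕ × ℕ)) := by
      rw [← prod_atTop_atTop_eq]
      exact tendsto_id.prodMk (hmono.tendsto_atTop)
    exact hCauchy.comp hpair
  have h2 : Tendsto (fun n : ℕ => (2 : ℝ≥0∞)⁻¹ ^ n * 2) atTop (𝓝 0) := by
    have := ENNReal.Tendsto.mul_const
      (ENNReal.tendsto_pow_atTop_nhds_zero_of_lt_one
        (by rw [ENNReal.inv_lt_one]; norm_num) : Tendsto (fun n : ℕ => (2:ℝ≥0∞)⁻¹ ^ n) atTop (𝓝 0))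
      (Or.inr (by norm_num : (2 : ℝ≥0∞) ≠ ⊤))
    simpa using this
  have hmain : Tendsto (fun n => muStar Ω μ (B n ∆ S)) atTop (𝓝 0) := by
    have hsum : Tendsto (fun n => μ (B n ∆ B (f n)) + 2⁻¹ ^ n * 2) atTop (𝓝 0) := by
      have := h1.add h2
      simpa using this
    exact tendsto_of_tendsto_of_tendsto_of_le_of_le tendsto_const_nhds hsum
      (fun n => zero_le) key
  exact ⟨⟨f, hmono, hgt, hmain⟩, ⟨S, hmain⟩⟩
end

section
/- (Well-definedness of F.) Let {A_n} and {B_n} be μ-Cauchy sequences in Ω with lim_{n→∞} μ(A_n △ B_n) = 0. Suppose f, g : ℕ → ℕ are such that lim_{n→∞} μ*(A_n △ limsup_k A_{f(k)}) = 0 and lim_{n→∞} μ*(B_n △ limsup_k B_{g(k)}) = 0. Then μ*( (limsup_k A_{f(k)}) △ (limsup_k B_{g(k)}) ) = 0, i.e., limsup_k A_{f(k)} = limsup_k B_{g(k)} almost everywhere. -/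
open Filter Set Topology
open scoped symmDiff ENNReal

/-- Monotonicity of `muStar`. -/
theorem muStar_mono' {X : Type*} (Ω : Set (Set X)) (μ : Set X → ℝ≥0∞) {S T : Set X}
    (h : S ⊆ T) : muStar Ω μ S ≤ muStar Ω μ T := by
  unfold muStar
  exact iInf_mono fun C => iInf_mono fun hC => iInf_mono' fun hT => ⟨h.trans hT, le_rfl⟩

/-- `muStar` is bounded by `μ` on `Ω`. -/
theorem muStar_le_of_mem' {X : Type*} (Ω : Set (Set X)) (μ : Set X → ℝ≥0∞)
    (h0 : μ ∅ = 0) (hΩ0 : ∅ ∈ Ω) {C : Set X} (hC : C ∈ Ω) : muStar Ω μ C ≤ μ C := by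
  unfold muStar
  refine iInf_le_of_le (fun i => if i = 0 then C else ∅) ?_
  refine iInf_le_of_le (fun i => by by_cases h : i = 0 <;> simp [h, hC, hΩ0]) ?_
  refine iInf_le_of_le (fun x hx => mem_iUnion.2 ⟨0, by simpa using hx⟩) ?_
  rw [tsum_eq_single 0 (fun b hb => by simp [hb, h0])]
  simp

/-- Finite subadditivity of `muStar`. -/
theorem muStar_union_le' {X : Type*} (Ω : Set (Set X)) (μ : Set X → ℝ≥0∞) (S T : Set X) :
    muStar Ω μ (S ∪ T) ≤ muStar Ω μ S + muStar Ω μ T := by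
  unfold muStar
  simp only [ENNReal.iInf_add, ENNReal.add_iInf]
  refine le_iInf fun C => le_iInf fun hC => le_iInf fun hT => le_iInf fun D =>
    le_iInf fun hD => le_iInf fun hS => ?_
  set E : ℕ → Set X := fun n => if Even n then C (n / 2) else D (n / 2) with hE
  have hEven : ∀ k, E (2 * k) = C k := fun k => by
    simp [hE, even_two_mul, Nat.mul_div_cancel_left _ two_pos]
  have hOdd : ∀ k, E (2 * k + 1) = D k := fun k => by
    simp [hE, Nat.even_add_one, Nat.mul_div_cancel_left, Nat.mul_add_div two_pos]
  refine iInf_le_of_le E (iInf_le_of_le ?_ (iInf_le_of_le ?_ ?_))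
  · intro i
    by_cases h : Even i <;> simp [hE, h, hC, hD]
  · rintro x (hx | hx)
    · obtain ⟨_, ⟨i, rfl⟩, hi⟩ := hS hx
      exact mem_iUnion.2 ⟨2 * i + 1, by rw [hOdd]; exact hi⟩
    · obtain ⟨_, ⟨i, rfl⟩, hi⟩ := hT hx
      exact mem_iUnion.2 ⟨2 * i, by rw [hEven]; exact hi⟩
  · rw [← tsum_even_add_odd ENNReal.summable ENNReal.summable, add_comm]
    simp [hEven, hOdd]

/-- well-definedness of F. -/
theorem stmt2 {X : Type*} (Ω : Set (Set X)) (μ : Set X → ℝ≥0∞)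
    (hΩ : IsSetAlgebraOn Ω) (hμ : IsCountablyAdditiveOn Ω μ) (hfin : μ Set.univ ≠ ⊤)
    (A B : ℕ → Set X) (hA : MuCauchy Ω μ A) (hB : MuCauchy Ω μ B)
    (hAB : Tendsto (fun n => μ (A n ∆ B n)) atTop (𝓝 0))
    (f g : ℕ → ℕ)
    (hf : Tendsto (fun n => muStar Ω μ (A n ∆ ⋂ m, ⋃ k, ⋃ (_ : m ≤ k), A (f k)))
      atTop (𝓝 0))
    (hg : Tendsto (fun n => muStar Ω μ (B n ∆ ⋂ m, ⋃ k, ⋃ (_ : m ≤ k), B (g k)))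
      atTop (𝓝 0)) :
    muStar Ω μ ((⋂ m, ⋃ k, ⋃ (_ : m ≤ k), A (f k)) ∆
      (⋂ m, ⋃ k, ⋃ (_ : m ≤ k), B (g k))) = 0 := by
  obtain ⟨hemp, hcompl, hunion⟩ := hΩ
  have hinter : ∀ S ∈ Ω, ∀ T ∈ Ω, S ∩ T ∈ Ω := fun S hS T hT => by
    have := hcompl _ (hunion _ (hcompl _ hS) _ (hcompl _ hT))
    simpa [Set.compl_union] using this
  have hsd : ∀ S ∈ Ω, ∀ T ∈ Ω, S ∆ T ∈ Ω := fun S hS T hT => by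
    have h1 : S \ T ∈ Ω := by
      rw [Set.diff_eq]; exact hinter _ hS _ (hcompl _ hT)
    have h2 : T \ S ∈ Ω := by
      rw [Set.diff_eq]; exact hinter _ hT _ (hcompl _ hS)
    simpa [Set.symmDiff_def] using hunion _ h1 _ h2
  set LA := ⋂ m, ⋃ k, ⋃ (_ : m ≤ k), A (f k) with hLA
  set LB := ⋂ m, ⋃ k, ⋃ (_ : m ≤ k), B (g k) with hLB
  have key : ∀ n, muStar Ω μ (LA ∆ LB) ≤
      muStar Ω μ (A n ∆ LA) + μ (A n ∆ B n) + muStar Ω μ (B n ∆ LB) := by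
    intro n
    have tri : LA ∆ LB ⊆ (LA ∆ A n) ∪ ((A n ∆ B n) ∪ (B n ∆ LB)) := by
      refine (symmDiff_triangle LA (A n) LB).trans ?_
      exact Set.union_subset_union_right _ (symmDiff_triangle (A n) (B n) LB)
    calc muStar Ω μ (LA ∆ LB)
        ≤ muStar Ω μ ((LA ∆ A n) ∪ ((A n ∆ B n) ∪ (B n ∆ LB))) := muStar_mono' Ω μ tri
      _ ≤ muStar Ω μ (LA ∆ A n) + muStar Ω μ ((A n ∆ B n) ∪ (B n ∆ LB)) :=
          muStar_union_le' Ω μ _ _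
      _ ≤ muStar Ω μ (LA ∆ A n) + (muStar Ω μ (A n ∆ B n) + muStar Ω μ (B n ∆ LB)) :=
          add_le_add_right (muStar_union_le' Ω μ _ _) _
      _ ≤ muStar Ω μ (A n ∆ LA) + μ (A n ∆ B n) + muStar Ω μ (B n ∆ LB) := by
          rw [symmDiff_comm LA (A n), ← add_assoc]
          refine add_le_add (add_le_add_right ?_ _) le_rfl
          exact muStar_le_of_mem' Ω μ hμ.1 hemp (hsd _ (hA.1 n) _ (hB.1 n))
  have hzero : Tendsto (fun n => muStar Ω μ (A n ∆ LA) + μ (A n ∆ B n) +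
      muStar Ω μ (B n ∆ LB)) atTop (𝓝 0) := by
    have := (hf.add hAB).add hg
    simpa using this
  have hle : muStar Ω μ (LA ∆ LB) ≤ 0 := ge_of_tendsto' hzero key
  exact le_antisymm hle zero_le
end

section
/- (Isometry identity.) Let {A_n} and {B_n} be μ-Cauchy sequences in Ω, and let S, T ⊆ X satisfy lim_{n→∞} μ*(A_n △ S) = 0 and lim_{n→∞} μ*(B_n △ T) = 0. Then the limit lim_{n→∞} μ(A_n △ B_n) exists and equals μ*(S △ T). -/
open Filter Set Topology MeasureTheory
open scoped symmDiff ENNReal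

section Aux
variable {X : Type*} {Ω : Set (Set X)} {μ : Set X → ℝ≥0∞}

lemma alg_inter (hΩ : IsSetAlgebraOn Ω) {A B : Set X} (hA : A ∈ Ω) (hB : B ∈ Ω) :
    A ∩ B ∈ Ω := by
  have := hΩ.2.1 _ (hΩ.2.2 _ (hΩ.2.1 _ hA) _ (hΩ.2.1 _ hB))
  rwa [compl_union, compl_compl, compl_compl] at this

lemma alg_diff (hΩ : IsSetAlgebraOn Ω) {A B : Set X} (hA : A ∈ Ω) (hB : B ∈ Ω) :
    A \ B ∈ Ω := alg_inter hΩ hA (hΩ.2.1 _ hB)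

lemma alg_symmDiff (hΩ : IsSetAlgebraOn Ω) {A B : Set X} (hA : A ∈ Ω) (hB : B ∈ Ω) :
    A ∆ B ∈ Ω := hΩ.2.2 _ (alg_diff hΩ hA hB) _ (alg_diff hΩ hB hA)

lemma mu_finAdd (hΩ : IsSetAlgebraOn Ω) (hμ : IsCountablyAdditiveOn Ω μ)
    {A B : Set X} (hA : A ∈ Ω) (hB : B ∈ Ω) (hd : Disjoint A B) :
    μ (A ∪ B) = μ A + μ B := by
  have hU : (⋃ i, (fun i => if i = 0 then A else if i = 1 then B else ∅) i) = A ∪ B := by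
    apply subset_antisymm
    · exact iUnion_subset fun i => by rcases i with _ | _ | i <;> simp
    · refine union_subset ?_ ?_
      · exact le_iSup_of_le 0 (by simp)
      · exact le_iSup_of_le 1 (by simp)
  have key := hμ.2 (fun i => if i = 0 then A else if i = 1 then B else ∅)
    (fun i => by rcases i with _ | _ | i <;> simp [hA, hB, hΩ.1])
    (fun i j hij => by
      rcases i with _ | _ | i <;> rcases j with _ | _ | j <;>
        simp_all [Function.onFun] <;> first | exact hd | exact hd.symm)
    (hU ▸ hΩ.2.2 _ hA _ hB)
  rw [hU] at key
  rw [key, tsum_eq_sum (s := {0, 1}) (fun i hi => by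
    rcases i with _ | _ | i
    · simp at hi
    · simp at hi
    · simp [hμ.1])]
  simp

lemma mu_mono (hΩ : IsSetAlgebraOn Ω) (hμ : IsCountablyAdditiveOn Ω μ)
    {A B : Set X} (hA : A ∈ Ω) (hB : B ∈ Ω) (hAB : A ⊆ B) : μ A ≤ μ B := by
  have : μ B = μ A + μ (B \ A) := by
    rw [← mu_finAdd hΩ hμ hA (alg_diff hΩ hB hA) disjoint_sdiff_right,
      union_diff_cancel hAB]
  rw [this]; exact le_self_add

lemma mu_csubadd (hΩ : IsSetAlgebraOn Ω) (hμ : IsCountablyAdditiveOn Ω μ)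
    {A : Set X} (hA : A ∈ Ω) {C : ℕ → Set X} (hC : ∀ i, C i ∈ Ω)
    (hcov : A ⊆ ⋃ i, C i) : μ A ≤ ∑' i, μ (C i) := by
  have hdisjΩ : ∀ i, disjointed C i ∈ Ω := by
    intro i
    rcases i with _ | i
    · simpa using hC 0
    · rw [disjointed_add_one]
      refine alg_diff hΩ (hC _) ?_
      induction i with
      | zero => simpa using hC 0
      | succ k ih => rw [partialSups_add_one]; exact hΩ.2.2 _ ih _ (hC _)
  have hDΩ : ∀ i, A ∩ disjointed C i ∈ Ω := fun i => alg_inter hΩ hA (hdisjΩ i)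
  have hUD : (⋃ i, A ∩ disjointed C i) = A := by
    rw [← inter_iUnion, iUnion_disjointed, inter_eq_left.2 hcov]
  have hpd : Pairwise (Function.onFun Disjoint fun i => A ∩ disjointed C i) :=
    fun i j hij => ((disjoint_disjointed C hij).mono inf_le_right inf_le_right)
  have key := hμ.2 _ hDΩ hpd (by rw [hUD]; exact hA)
  rw [hUD] at key
  rw [key]
  exact ENNReal.tsum_le_tsum fun i => mu_mono hΩ hμ (hDΩ i) (hC i)
    ((inter_subset_right).trans (disjointed_subset C i))

open Classical in
noncomputable def mExt (Ω : Set (Set X)) (μ : Set X → ℝ≥0∞) : Set X → ℝ≥0∞ :=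
  fun A => if A ∈ Ω then μ A else ⊤

lemma mExt_empty (hΩ : IsSetAlgebraOn Ω) (hμ : IsCountablyAdditiveOn Ω μ) :
    mExt Ω μ ∅ = 0 := by simp [mExt, hΩ.1, hμ.1]

lemma mExt_top {s : Set X} (hs : s ∉ Ω) : mExt Ω μ s = ⊤ := by simp [mExt, hs]

lemma tsum_mExt {C : ℕ → Set X} (hC : ∀ i, C i ∈ Ω) :
    ∑' i, mExt Ω μ (C i) = ∑' i, μ (C i) :=
  tsum_congr fun i => by simp [mExt, hC i]

lemma muStar_eq_ofFunction (hΩ : IsSetAlgebraOn Ω) (hμ : IsCountablyAdditiveOn Ω μ)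
    (A : Set X) :
    muStar Ω μ A = OuterMeasure.ofFunction (mExt Ω μ) (mExt_empty hΩ hμ) A := by
  rw [OuterMeasure.ofFunction_eq_iInf_mem _ _ (P := (· ∈ Ω))
    (fun s hs => mExt_top hs) A, muStar]
  apply le_antisymm
  · refine le_iInf fun C => le_iInf fun hC => le_iInf fun hcov => ?_
    exact iInf_le_of_le C (iInf_le_of_le hC (iInf_le_of_le hcov
      (le_of_eq (tsum_mExt hC).symm)))
  · refine le_iInf fun C => le_iInf fun hC => le_iInf fun hcov => ?_
    exact iInf_le_of_le C (iInf_le_of_le hC (iInf_le_of_le hcov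
      (le_of_eq (tsum_mExt hC))))

lemma muStar_eq_mu (hΩ : IsSetAlgebraOn Ω) (hμ : IsCountablyAdditiveOn Ω μ)
    {A : Set X} (hA : A ∈ Ω) : muStar Ω μ A = μ A := by
  rw [muStar_eq_ofFunction hΩ hμ]
  refine le_antisymm ((OuterMeasure.ofFunction_le A).trans_eq (by simp [mExt, hA])) ?_
  rw [OuterMeasure.ofFunction_eq_iInf_mem _ _ (P := (· ∈ Ω)) (fun s hs => mExt_top hs) A]
  refine le_iInf fun C => le_iInf fun hC => le_iInf fun hcov => ?_
  rw [tsum_mExt hC]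
  exact mu_csubadd hΩ hμ hA hC hcov

lemma muStar_mono (hΩ : IsSetAlgebraOn Ω) (hμ : IsCountablyAdditiveOn Ω μ)
    {A B : Set X} (h : A ⊆ B) : muStar Ω μ A ≤ muStar Ω μ B := by
  rw [muStar_eq_ofFunction hΩ hμ, muStar_eq_ofFunction hΩ hμ]
  exact measure_mono h

lemma muStar_union_le (hΩ : IsSetAlgebraOn Ω) (hμ : IsCountablyAdditiveOn Ω μ)
    (A B : Set X) : muStar Ω μ (A ∪ B) ≤ muStar Ω μ A + muStar Ω μ B := by
  rw [muStar_eq_ofFunction hΩ hμ, muStar_eq_ofFunction hΩ hμ, muStar_eq_ofFunction hΩ hμ]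
  exact measure_union_le A B

lemma symmDiff_triangle_sub (A B S T : Set X) :
    A ∆ B ⊆ (S ∆ T) ∪ ((A ∆ S) ∪ (B ∆ T)) := by
  intro x hx
  simp only [mem_symmDiff, mem_union] at *
  tauto

end Aux

/-- isometry identity. -/
theorem stmt3 {X : Type*} (Ω : Set (Set X)) (μ : Set X → ℝ≥0∞)
    (hΩ : IsSetAlgebraOn Ω) (hμ : IsCountablyAdditiveOn Ω μ) (hfin : μ Set.univ ≠ ⊤)
    (A B : ℕ → Set X) (hA : MuCauchy Ω μ A) (hB : MuCauchy Ω μ B)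
    (S T : Set X)
    (hS : Tendsto (fun n => muStar Ω μ (A n ∆ S)) atTop (𝓝 0))
    (hT : Tendsto (fun n => muStar Ω μ (B n ∆ T)) atTop (𝓝 0)) :
    Tendsto (fun n => μ (A n ∆ B n)) atTop (𝓝 (muStar Ω μ (S ∆ T))) := by
  set L := muStar Ω μ (S ∆ T) with hL
  set g : ℕ → ℝ≥0∞ := fun n => muStar Ω μ (A n ∆ S) + muStar Ω μ (B n ∆ T) with hg
  have hAn : ∀ n, μ (A n ∆ B n) = muStar Ω μ (A n ∆ B n) := fun n =>
    (muStar_eq_mu hΩ hμ (alg_symmDiff hΩ (hA.1 n) (hB.1 n))).symm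
  have upper : ∀ n, muStar Ω μ (A n ∆ B n) ≤ L + g n := by
    intro n
    calc muStar Ω μ (A n ∆ B n)
        ≤ muStar Ω μ ((S ∆ T) ∪ ((A n ∆ S) ∪ (B n ∆ T))) :=
          muStar_mono hΩ hμ (symmDiff_triangle_sub _ _ _ _)
      _ ≤ L + muStar Ω μ ((A n ∆ S) ∪ (B n ∆ T)) := muStar_union_le hΩ hμ _ _
      _ ≤ L + g n := add_le_add_right (muStar_union_le hΩ hμ _ _) _
  have lower : ∀ n, L ≤ muStar Ω μ (A n ∆ B n) + g n := by
    intro n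
    calc L ≤ muStar Ω μ ((A n ∆ B n) ∪ ((S ∆ A n) ∪ (T ∆ B n))) :=
          muStar_mono hΩ hμ (symmDiff_triangle_sub _ _ _ _)
      _ ≤ muStar Ω μ (A n ∆ B n) + muStar Ω μ ((S ∆ A n) ∪ (T ∆ B n)) :=
          muStar_union_le hΩ hμ _ _
      _ ≤ muStar Ω μ (A n ∆ B n) + g n := by
          refine add_le_add_right ((muStar_union_le hΩ hμ _ _).trans ?_) _
          simp only [hg, symmDiff_comm S, symmDiff_comm T, le_refl]
  have hgto : Tendsto g atTop (𝓝 0) := by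
    have := hS.add hT
    simpa using this
  have hlow : Tendsto (fun n => L - g n) atTop (𝓝 L) := by
    have := ENNReal.Tendsto.sub (tendsto_const_nhds (x := L)) hgto (Or.inr (by simp))
    simpa using this
  have hhigh : Tendsto (fun n => L + g n) atTop (𝓝 L) := by
    have := (tendsto_const_nhds (x := L)).add hgto
    simpa using this
  refine tendsto_of_tendsto_of_tendsto_of_le_of_le hlow hhigh ?_ ?_
  · intro n
    simp only [hAn n]
    exact tsub_le_iff_right.2 (lower n)
  · intro n
    simp only [hAn n]
    exact upper n
end

section
/- (Closure of S̃ under countable unions.) For each i ≥ 1 let {B^i_n}_n be a μ-Cauchy sequence in Ω and let S_i ⊆ X satisfy lim_{n→∞} μ*(B^i_n △ S_i) = 0. Then there exists a μ-Cauchy sequence {Y_L} in Ω (each Y_L a finite union of sets B^i_{K_L} from the given sequences) such that lim_{L→∞} μ*(Y_L △ ⋃_{i=1}^∞ S_i) = 0. In particular, ⋃_{i=1}^∞ S_i ∈ S̃. -/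
open Filter Set Topology
open scoped symmDiff ENNReal

namespace Stmt9Aux
open MeasureTheory
open scoped Classical

variable {X : Type*} {Ω : Set (Set X)} {μ : Set X → ℝ≥0∞}

lemma mem_univ' (hΩ : IsSetAlgebraOn Ω) : Set.univ ∈ Ω := by
  simpa using hΩ.2.1 ∅ hΩ.1

lemma mem_inter (hΩ : IsSetAlgebraOn Ω) {A B : Set X} (hA : A ∈ Ω) (hB : B ∈ Ω) :
    A ∩ B ∈ Ω := by
  simpa [Set.compl_union] using hΩ.2.1 _ (hΩ.2.2 _ (hΩ.2.1 A hA) _ (hΩ.2.1 B hB))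

lemma mem_diff' (hΩ : IsSetAlgebraOn Ω) {A B : Set X} (hA : A ∈ Ω) (hB : B ∈ Ω) :
    A \ B ∈ Ω := by
  rw [Set.diff_eq]; exact mem_inter hΩ hA (hΩ.2.1 B hB)

lemma mem_symmDiff' (hΩ : IsSetAlgebraOn Ω) {A B : Set X} (hA : A ∈ Ω) (hB : B ∈ Ω) :
    A ∆ B ∈ Ω :=
  hΩ.2.2 _ (mem_diff' hΩ hA hB) _ (mem_diff' hΩ hB hA)

lemma mem_biUnion_lt (hΩ : IsSetAlgebraOn Ω) {f : ℕ → Set X} (hf : ∀ i, f i ∈ Ω) (n : ℕ) :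
    (⋃ i, ⋃ (_ : i < n), f i) ∈ Ω := by
  induction n with
  | zero => simpa using hΩ.1
  | succ n ih => rw [biUnion_lt_succ]; exact hΩ.2.2 _ ih _ (hf n)

lemma mem_biUnion_le (hΩ : IsSetAlgebraOn Ω) {f : ℕ → Set X} (hf : ∀ i, f i ∈ Ω) (n : ℕ) :
    (⋃ i, ⋃ (_ : i ≤ n), f i) ∈ Ω := by
  have : (⋃ i, ⋃ (_ : i ≤ n), f i) = ⋃ i, ⋃ (_ : i < n + 1), f i := by
    simp [Nat.lt_succ_iff]
  rw [this]; exact mem_biUnion_lt hΩ hf (n + 1)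

lemma mu_union (hμ : IsCountablyAdditiveOn Ω μ) (hΩ : IsSetAlgebraOn Ω)
    {A B : Set X} (hA : A ∈ Ω) (hB : B ∈ Ω) (hd : Disjoint A B) :
    μ (A ∪ B) = μ A + μ B := by
  set f : ℕ → Set X := fun n => if n = 0 then A else if n = 1 then B else ∅ with hf
  have hunion : (⋃ i, f i) = A ∪ B := by
    ext x; simp only [mem_iUnion, hf, mem_union]
    constructor
    · rintro ⟨i, hi⟩
      rcases Nat.lt_or_ge i 2 with h | h
      · interval_cases i <;> simp_all
      · have : ¬ i = 0 := by omega
        have h1 : ¬ i = 1 := by omega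
        simp_all
    · rintro (h | h)
      exacts [⟨0, by simp [h]⟩, ⟨1, by simp [h]⟩]
  have hfΩ : ∀ i, f i ∈ Ω := by
    intro i; simp only [hf]; split
    · exact hA
    · split; exacts [hB, hΩ.1]
  have hdisj : Pairwise (Function.onFun Disjoint f) := by
    intro i j hij
    simp only [Function.onFun, hf]
    split_ifs <;> first
      | omega
      | exact hd
      | exact hd.symm
      | simp
  have := hμ.2 f hfΩ hdisj (hunion ▸ hΩ.2.2 _ hA _ hB)
  rw [hunion] at this
  rw [this, tsum_eq_sum (s := ({0, 1} : Finset ℕ)) ?_]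
  · rw [Finset.sum_insert (by norm_num), Finset.sum_singleton]; simp [hf]
  · intro b hb
    simp only [Finset.mem_insert, Finset.mem_singleton, not_or] at hb
    simp [hf, hb.1, hb.2, hμ.1]

lemma mu_mono (hμ : IsCountablyAdditiveOn Ω μ) (hΩ : IsSetAlgebraOn Ω)
    {A B : Set X} (hA : A ∈ Ω) (hB : B ∈ Ω) (hAB : A ⊆ B) : μ A ≤ μ B := by
  have h2 : μ (A ∪ B \ A) = μ A + μ (B \ A) :=
    mu_union hμ hΩ hA (mem_diff' hΩ hB hA) disjoint_sdiff_self_right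
  calc μ A ≤ μ A + μ (B \ A) := le_self_add
    _ = μ (A ∪ B \ A) := h2.symm
    _ = μ B := by rw [Set.union_diff_cancel hAB]

lemma mu_le_tsum (hμ : IsCountablyAdditiveOn Ω μ) (hΩ : IsSetAlgebraOn Ω)
    {A : Set X} (hA : A ∈ Ω) (C : ℕ → Set X) (hC : ∀ i, C i ∈ Ω)
    (hcov : A ⊆ ⋃ i, C i) : μ A ≤ ∑' i, μ (C i) := by
  set F : ℕ → Set X := fun i => (A ∩ C i) \ ⋃ j, ⋃ (_ : j < i), C j with hFdef
  have hFsub : ∀ i, F i ⊆ C i := fun i x hx => hx.1.2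
  have hFΩ : ∀ i, F i ∈ Ω := fun i =>
    mem_diff' hΩ (mem_inter hΩ hA (hC i)) (mem_biUnion_lt hΩ hC i)
  have key : ∀ i j, i < j → Disjoint (F i) (F j) := by
    intro i j hij
    rw [Set.disjoint_left]
    intro x hxi hxj
    exact hxj.2 (mem_iUnion.2 ⟨i, mem_iUnion.2 ⟨hij, hxi.1.2⟩⟩)
  have hFdisj : Pairwise (Function.onFun Disjoint F) := by
    intro i j hij
    rcases hij.lt_or_gt with h | h
    exacts [key i j h, (key j i h).symm]
  have hFunion : (⋃ i, F i) = A := by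
    apply Set.Subset.antisymm
    · exact iUnion_subset fun i x hx => hx.1.1
    · intro x hx
      have hex : ∃ i, x ∈ C i := mem_iUnion.1 (hcov hx)
      refine mem_iUnion.2 ⟨Nat.find hex, ⟨hx, Nat.find_spec hex⟩, ?_⟩
      intro hmem
      obtain ⟨j, hj⟩ := mem_iUnion.1 hmem
      obtain ⟨hjlt, hxj⟩ := mem_iUnion.1 hj
      exact Nat.find_min hex hjlt hxj
  have := hμ.2 F hFΩ hFdisj (hFunion ▸ hA)
  rw [hFunion] at this
  rw [this]
  exact ENNReal.tsum_le_tsum fun i => mu_mono hμ hΩ (hFΩ i) (hC i) (hFsub i)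

lemma mu_le_muStar (hμ : IsCountablyAdditiveOn Ω μ) (hΩ : IsSetAlgebraOn Ω)
    {A : Set X} (hA : A ∈ Ω) : μ A ≤ muStar Ω μ A :=
  le_iInf fun C => le_iInf fun hC => le_iInf fun hcov => mu_le_tsum hμ hΩ hA C hC hcov

lemma muStar_le_mu (hΩ : IsSetAlgebraOn Ω) (hμ0 : μ ∅ = 0)
    {A : Set X} (hA : A ∈ Ω) : muStar Ω μ A ≤ μ A := by
  refine iInf_le_of_le (fun i => if i = 0 then A else ∅) (iInf_le_of_le ?_ (iInf_le_of_le ?_ ?_))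
  · intro i; dsimp only; split; exacts [hA, hΩ.1]
  · intro x hx; exact mem_iUnion.2 ⟨0, by simpa using hx⟩
  · rw [tsum_eq_single 0 (fun b hb => by simp [hb, hμ0])]; simp

/-- `muStar` as a mathlib outer measure. -/
noncomputable def nu (Ω : Set (Set X)) (μ : Set X → ℝ≥0∞) (h0 : ∅ ∈ Ω) (hμ0 : μ ∅ = 0) :
    OuterMeasure X :=
  OuterMeasure.ofFunction (fun A => if A ∈ Ω then μ A else ⊤) (by simp [h0, hμ0])

lemma muStar_eq_nu (h0 : ∅ ∈ Ω) (hμ0 : μ ∅ = 0) (A : Set X) :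
    muStar Ω μ A = nu Ω μ h0 hμ0 A := by
  rw [nu, OuterMeasure.ofFunction_apply]
  apply le_antisymm
  · refine le_iInf fun t => le_iInf fun hcov => ?_
    by_cases ht : ∀ i, t i ∈ Ω
    · refine le_trans (iInf_le_of_le t (iInf_le_of_le ht (iInf_le_of_le hcov le_rfl)))
        (le_of_eq ?_)
      exact tsum_congr fun i => by simp [ht i]
    · push_neg at ht
      obtain ⟨i, hi⟩ := ht
      refine le_trans le_top (le_trans (le_of_eq ?_) (ENNReal.le_tsum i))
      simp [hi]
  · refine le_iInf fun C => le_iInf fun hC => le_iInf fun hcov => ?_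
    refine le_trans (iInf_le_of_le C (iInf_le_of_le hcov le_rfl)) (le_of_eq ?_)
    exact tsum_congr fun i => by simp [hC i]

lemma muStar_mono (hΩ : IsSetAlgebraOn Ω) (hμ0 : μ ∅ = 0) {A B : Set X} (h : A ⊆ B) :
    muStar Ω μ A ≤ muStar Ω μ B := by
  rw [muStar_eq_nu hΩ.1 hμ0, muStar_eq_nu hΩ.1 hμ0]
  exact measure_mono h

lemma muStar_iUnion_le (hΩ : IsSetAlgebraOn Ω) (hμ0 : μ ∅ = 0) (A : ℕ → Set X) :
    muStar Ω μ (⋃ i, A i) ≤ ∑' i, muStar Ω μ (A i) := by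
  simp only [muStar_eq_nu hΩ.1 hμ0]
  exact measure_iUnion_le A

lemma muStar_union_le (hΩ : IsSetAlgebraOn Ω) (hμ0 : μ ∅ = 0) (A B : Set X) :
    muStar Ω μ (A ∪ B) ≤ muStar Ω μ A + muStar Ω μ B := by
  simp only [muStar_eq_nu hΩ.1 hμ0]
  exact measure_union_le A B

lemma muStar_empty (hΩ : IsSetAlgebraOn Ω) (hμ0 : μ ∅ = 0) :
    muStar Ω μ (∅ : Set X) = 0 := by
  rw [muStar_eq_nu hΩ.1 hμ0]
  exact measure_empty

lemma muStar_triangle (hΩ : IsSetAlgebraOn Ω) (hμ0 : μ ∅ = 0) (A B C : Set X) :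
    muStar Ω μ (A ∆ C) ≤ muStar Ω μ (A ∆ B) + muStar Ω μ (B ∆ C) :=
  le_trans (muStar_mono hΩ hμ0 (symmDiff_triangle A B C)) (muStar_union_le hΩ hμ0 _ _)

lemma iUnion_symmDiff_subset (f g : ℕ → Set X) :
    (⋃ i, f i) ∆ (⋃ i, g i) ⊆ ⋃ i, (f i ∆ g i) := by
  intro x hx
  rw [Set.mem_symmDiff] at hx
  rcases hx with ⟨h1, h2⟩ | ⟨h1, h2⟩ <;> simp only [mem_iUnion] at h1 h2 ⊢ <;>
    obtain ⟨i, hi⟩ := h1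
  · exact ⟨i, Set.mem_symmDiff.2 (Or.inl ⟨hi, fun h => h2 ⟨i, h⟩⟩)⟩
  · exact ⟨i, Set.mem_symmDiff.2 (Or.inr ⟨hi, fun h => h2 ⟨i, h⟩⟩)⟩

lemma biUnion_symmDiff_subset (f g : ℕ → Set X) (N : ℕ) :
    (⋃ i, ⋃ (_ : i ≤ N), f i) ∆ (⋃ i, ⋃ (_ : i ≤ N), g i) ⊆
      ⋃ i, ⋃ (_ : i ≤ N), (f i ∆ g i) := by
  intro x hx
  rw [Set.mem_symmDiff] at hx
  rcases hx with ⟨h1, h2⟩ | ⟨h1, h2⟩ <;> simp only [mem_iUnion] at h1 h2 ⊢ <;>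
    obtain ⟨i, hiN, hi⟩ := h1
  · exact ⟨i, hiN, Set.mem_symmDiff.2 (Or.inl ⟨hi, fun h => h2 ⟨i, hiN, h⟩⟩)⟩
  · exact ⟨i, hiN, Set.mem_symmDiff.2 (Or.inr ⟨hi, fun h => h2 ⟨i, hiN, h⟩⟩)⟩

lemma muStar_biUnion_le (hΩ : IsSetAlgebraOn Ω) (hμ0 : μ ∅ = 0) (A : ℕ → Set X) (N : ℕ) :
    muStar Ω μ (⋃ i, ⋃ (_ : i ≤ N), A i) ≤ ∑ i ∈ Finset.range (N + 1), muStar Ω μ (A i) := by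
  have h1 : (⋃ i, ⋃ (_ : i ≤ N), A i) = ⋃ i, (if i ≤ N then A i else ∅) := by
    ext x
    simp only [mem_iUnion]
    constructor
    · rintro ⟨i, hiN, hx⟩; exact ⟨i, by simp [hiN, hx]⟩
    · rintro ⟨i, hx⟩
      by_cases hiN : i ≤ N
      · exact ⟨i, hiN, by simpa [hiN] using hx⟩
      · simp [hiN] at hx
  rw [h1]
  refine le_trans (muStar_iUnion_le hΩ hμ0 _) (le_of_eq ?_)
  rw [tsum_eq_sum (s := Finset.range (N + 1)) ?_]
  · refine Finset.sum_congr rfl fun i hi => ?_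
    rw [Finset.mem_range, Nat.lt_succ_iff] at hi
    simp [hi]
  · intro b hb
    rw [Finset.mem_range, Nat.lt_succ_iff] at hb
    simp [hb, muStar_empty hΩ hμ0]

lemma master {X : Type*} (Ω : Set (Set X)) (μ : Set X → ℝ≥0∞)
    (hΩ : IsSetAlgebraOn Ω) (hμ : IsCountablyAdditiveOn Ω μ) (hfin : μ Set.univ ≠ ⊤)
    (B : ℕ → ℕ → Set X) (S : ℕ → Set X)
    (hB : ∀ i n, B i n ∈ Ω)
    (hS : ∀ i, Tendsto (fun n => muStar Ω μ (B i n ∆ S i)) atTop (𝓝 0))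
    (ε : ℝ≥0∞) (hε : 0 < ε) :
    ∃ N K : ℕ, muStar Ω μ ((⋃ i, ⋃ (_ : i ≤ N), B i K) ∆ ⋃ i, S i) ≤ ε := by
  have hμ0 := hμ.1
  set δ : ℕ → ℝ≥0∞ := fun i => ε / 4 * 2⁻¹ ^ (i + 1) with hδ
  have hδpos : ∀ i, 0 < δ i := by
    intro i
    refine ENNReal.mul_pos (ENNReal.div_pos hε.ne' (by norm_num)).ne' ?_
    exact pow_ne_zero _ (ENNReal.inv_ne_zero.2 (by norm_num))
  have hgeom : ∑' i : ℕ, (2⁻¹ : ℝ≥0∞) ^ (i + 1) = 1 := by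
    calc ∑' i : ℕ, (2⁻¹ : ℝ≥0∞) ^ (i + 1) = ∑' i : ℕ, (2⁻¹ : ℝ≥0∞) ^ i * 2⁻¹ := by
          simp [pow_succ]
      _ = (∑' i : ℕ, (2⁻¹ : ℝ≥0∞) ^ i) * 2⁻¹ := ENNReal.tsum_mul_right
      _ = (1 - 2⁻¹)⁻¹ * 2⁻¹ := by rw [ENNReal.tsum_geometric]
      _ = 1 := by
          rw [ENNReal.one_sub_inv_two, inv_inv,
            ENNReal.mul_inv_cancel (by norm_num) (by norm_num)]
  have hδsum : ∑' i, δ i = ε / 4 := by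
    rw [hδ]
    simpa [ENNReal.tsum_mul_left] using by rw [hgeom, mul_one]
  have hMex : ∀ i, ∃ m : ℕ, ∀ n ≥ m, muStar Ω μ (B i n ∆ S i) ≤ δ i := fun i =>
    ENNReal.tendsto_atTop_zero.mp (hS i) (δ i) (hδpos i)
  choose M hM using hMex
  set C : ℕ → Set X := fun i => B i (M i) with hC
  have hCΩ : ∀ i, C i ∈ Ω := fun i => hB i (M i)
  have hCS : ∀ i, muStar Ω μ (C i ∆ S i) ≤ δ i := fun i => hM i (M i) le_rfl
  set E : ℕ → Set X := fun i => C i \ ⋃ j, ⋃ (_ : j < i), C j with hE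
  have hEΩ : ∀ i, E i ∈ Ω := fun i => mem_diff' hΩ (hCΩ i) (mem_biUnion_lt hΩ hCΩ i)
  have hEkey : ∀ i j, i < j → Disjoint (E i) (E j) := by
    intro i j hij
    rw [Set.disjoint_left]
    intro x hxi hxj
    exact hxj.2 (mem_iUnion.2 ⟨i, mem_iUnion.2 ⟨hij, hxi.1⟩⟩)
  have hEdisj : Pairwise (Function.onFun Disjoint E) := by
    intro i j hij
    rcases hij.lt_or_gt with h | h
    exacts [hEkey i j h, (hEkey j i h).symm]
  have hpartial : ∀ n, μ (⋃ i, ⋃ (_ : i < n), E i) = ∑ i ∈ Finset.range n, μ (E i) := by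
    intro n
    induction n with
    | zero => simpa using hμ.1
    | succ n ih =>
      have hdisj : Disjoint (⋃ i, ⋃ (_ : i < n), E i) (E n) := by
        rw [Set.disjoint_left]
        intro x hx hxn
        obtain ⟨i, hi⟩ := mem_iUnion.1 hx
        obtain ⟨hin, hxi⟩ := mem_iUnion.1 hi
        exact (Set.disjoint_left.1 (hEkey i n hin)) hxi hxn
      rw [biUnion_lt_succ, mu_union hμ hΩ (mem_biUnion_lt hΩ hEΩ n) (hEΩ n) hdisj, ih,
        Finset.sum_range_succ]
  have htsum_ne : ∑' i, μ (E i) ≠ ⊤ := by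
    refine ne_top_of_le_ne_top hfin ?_
    rw [ENNReal.tsum_eq_iSup_sum]
    refine iSup_le fun s => ?_
    obtain ⟨n, hn⟩ := s.exists_nat_subset_range
    calc ∑ i ∈ s, μ (E i) ≤ ∑ i ∈ Finset.range n, μ (E i) :=
          Finset.sum_le_sum_of_subset hn
      _ = μ (⋃ i, ⋃ (_ : i < n), E i) := (hpartial n).symm
      _ ≤ μ Set.univ := mu_mono hμ hΩ (mem_biUnion_lt hΩ hEΩ n) (mem_univ' hΩ) (subset_univ _)
  obtain ⟨N0, hN0⟩ := ENNReal.tendsto_atTop_zero.mp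
    (ENNReal.tendsto_sum_nat_add (fun i => μ (E i)) htsum_ne) (ε / 4)
    (ENNReal.div_pos hε.ne' (by norm_num))
  set N := N0 with hNdef
  have htail : ∑' k, μ (E (k + (N + 1))) ≤ ε / 4 := hN0 (N + 1) (Nat.le_succ N)
  have hcover : (⋃ i, C i) \ (⋃ i, ⋃ (_ : i ≤ N), C i) ⊆ ⋃ k, E (k + (N + 1)) := by
    intro x hx
    obtain ⟨hx1, hx2⟩ := hx
    have hex : ∃ i, x ∈ C i := mem_iUnion.1 hx1
    have hxi0 : x ∈ C (Nat.find hex) := Nat.find_spec hex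
    have hnot : ∀ j ≤ N, x ∉ C j := fun j hj hxj =>
      hx2 (mem_iUnion.2 ⟨j, mem_iUnion.2 ⟨hj, hxj⟩⟩)
    have hgt : N + 1 ≤ Nat.find hex := by
      by_contra h
      push_neg at h
      exact hnot _ (by omega) hxi0
    have hxE : x ∈ E (Nat.find hex) := by
      refine ⟨hxi0, ?_⟩
      intro hmem
      obtain ⟨j, hj⟩ := mem_iUnion.1 hmem
      obtain ⟨hjlt, hxj⟩ := mem_iUnion.1 hj
      exact Nat.find_min hex hjlt hxj
    refine mem_iUnion.2 ⟨Nat.find hex - (N + 1), ?_⟩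
    rwa [Nat.sub_add_cancel hgt]
  have ht2 : muStar Ω μ ((⋃ i, ⋃ (_ : i ≤ N), C i) ∆ (⋃ i, C i)) ≤ ε / 4 := by
    have hsub : (⋃ i, ⋃ (_ : i ≤ N), C i) ⊆ ⋃ i, C i := by
      refine iUnion_subset fun i => iUnion_subset fun _ => subset_iUnion C i
    rw [symmDiff_of_le hsub]
    calc muStar Ω μ ((⋃ i, C i) \ ⋃ i, ⋃ (_ : i ≤ N), C i)
        ≤ muStar Ω μ (⋃ k, E (k + (N + 1))) := muStar_mono hΩ hμ0 hcover
      _ ≤ ∑' k, muStar Ω μ (E (k + (N + 1))) := muStar_iUnion_le hΩ hμ0 _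
      _ ≤ ∑' k, μ (E (k + (N + 1))) :=
          ENNReal.tsum_le_tsum fun k => muStar_le_mu hΩ hμ0 (hEΩ _)
      _ ≤ ε / 4 := htail
  set K := Finset.sup (Finset.range (N + 1)) M with hKdef
  have hBK : ∀ i ≤ N, muStar Ω μ (B i K ∆ S i) ≤ δ i := fun i hi =>
    hM i K (Finset.le_sup (f := M) (Finset.mem_range.2 (Nat.lt_succ_of_le hi)))
  have ht1 : muStar Ω μ ((⋃ i, ⋃ (_ : i ≤ N), B i K) ∆ (⋃ i, ⋃ (_ : i ≤ N), C i))
      ≤ ε / 4 + ε / 4 := by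
    refine le_trans (muStar_mono hΩ hμ0 (biUnion_symmDiff_subset _ _ N)) ?_
    refine le_trans (muStar_biUnion_le hΩ hμ0 _ N) ?_
    calc ∑ i ∈ Finset.range (N + 1), muStar Ω μ (B i K ∆ C i)
        ≤ ∑ i ∈ Finset.range (N + 1), (δ i + δ i) := by
          refine Finset.sum_le_sum fun i hi => ?_
          rw [Finset.mem_range, Nat.lt_succ_iff] at hi
          refine le_trans (muStar_triangle hΩ hμ0 (B i K) (S i) (C i)) ?_
          exact add_le_add (hBK i hi) (by rw [symmDiff_comm]; exact hCS i)
      _ ≤ ∑' i, (δ i + δ i) := ENNReal.sum_le_tsum _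
      _ = ε / 4 + ε / 4 := by rw [ENNReal.tsum_add, hδsum]
  have ht3 : muStar Ω μ ((⋃ i, C i) ∆ (⋃ i, S i)) ≤ ε / 4 := by
    refine le_trans (muStar_mono hΩ hμ0 (iUnion_symmDiff_subset C S)) ?_
    refine le_trans (muStar_iUnion_le hΩ hμ0 _) ?_
    rw [← hδsum]
    exact ENNReal.tsum_le_tsum hCS
  refine ⟨N, K, ?_⟩
  have h1 := muStar_triangle hΩ hμ0 (⋃ i, ⋃ (_ : i ≤ N), B i K)
    (⋃ i, ⋃ (_ : i ≤ N), C i) (⋃ i, S i)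
  have h2 := muStar_triangle hΩ hμ0 (⋃ i, ⋃ (_ : i ≤ N), C i) (⋃ i, C i) (⋃ i, S i)
  have hq : ε / 2 / 2 = ε / 4 := by
    rw [div_eq_mul_inv, div_eq_mul_inv, div_eq_mul_inv, mul_assoc,
      ← ENNReal.mul_inv (by norm_num) (by norm_num)]
    norm_num
  calc muStar Ω μ ((⋃ i, ⋃ (_ : i ≤ N), B i K) ∆ ⋃ i, S i)
      ≤ (ε / 4 + ε / 4) + (ε / 4 + ε / 4) :=
        le_trans h1 (add_le_add ht1 (le_trans h2 (add_le_add ht2 ht3)))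
    _ = ε := by
        rw [← hq, ENNReal.add_halves, ENNReal.add_halves]

end Stmt9Aux

/-- closure of S̃ under countable unions. -/
theorem stmt9 {X : Type*} (Ω : Set (Set X)) (μ : Set X → ℝ≥0∞)
    (hΩ : IsSetAlgebraOn Ω) (hμ : IsCountablyAdditiveOn Ω μ) (hfin : μ Set.univ ≠ ⊤)
    (B : ℕ → ℕ → Set X) (S : ℕ → Set X)
    (hB : ∀ i, MuCauchy Ω μ (B i))
    (hS : ∀ i, Tendsto (fun n => muStar Ω μ (B i n ∆ S i)) atTop (𝓝 0)) :
    (∃ Y : ℕ → Set X, MuCauchy Ω μ Y ∧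
      (∃ N K : ℕ → ℕ, ∀ L, Y L = ⋃ i, ⋃ (_ : i ≤ N L), B i (K L)) ∧
      Tendsto (fun L => muStar Ω μ (Y L ∆ ⋃ i, S i)) atTop (𝓝 0)) ∧
    (⋃ i, S i) ∈ Stilde Ω μ := by
  have hμ0 := hμ.1
  have hB' : ∀ i n, B i n ∈ Ω := fun i => (hB i).1
  have hhalf : (2⁻¹ : ℝ≥0∞) < 1 := by
    rw [ENNReal.inv_lt_one]; norm_num
  have hpow : ∀ L : ℕ, (0 : ℝ≥0∞) < 2⁻¹ ^ L := fun L =>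
    ENNReal.pow_pos (ENNReal.inv_pos.2 (by norm_num)) L
  have hex : ∀ L : ℕ, ∃ N K : ℕ,
      muStar Ω μ ((⋃ i, ⋃ (_ : i ≤ N), B i K) ∆ ⋃ i, S i) ≤ 2⁻¹ ^ L := fun L =>
    Stmt9Aux.master Ω μ hΩ hμ hfin B S hB' hS _ (hpow L)
  choose N K hNK using hex
  set Y : ℕ → Set X := fun L => ⋃ i, ⋃ (_ : i ≤ N L), B i (K L) with hY
  have hYΩ : ∀ L, Y L ∈ Ω := fun L =>
    Stmt9Aux.mem_biUnion_le hΩ (fun i => hB' i (K L)) (N L)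
  have hYS : ∀ L, muStar Ω μ (Y L ∆ ⋃ i, S i) ≤ 2⁻¹ ^ L := hNK
  have htendpow : Tendsto (fun L : ℕ => (2⁻¹ : ℝ≥0∞) ^ L) atTop (𝓝 0) :=
    ENNReal.tendsto_pow_atTop_nhds_zero_of_lt_one hhalf
  have htendY : Tendsto (fun L => muStar Ω μ (Y L ∆ ⋃ i, S i)) atTop (𝓝 0) :=
    tendsto_of_tendsto_of_tendsto_of_le_of_le tendsto_const_nhds htendpow
      (fun L => zero_le) hYS
  have hcauchy : MuCauchy Ω μ Y := by
    refine ⟨hYΩ, ?_⟩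
    have hb : ∀ p : ℕ × ℕ, μ (Y p.1 ∆ Y p.2) ≤ 2⁻¹ ^ p.1 + 2⁻¹ ^ p.2 := by
      intro p
      calc μ (Y p.1 ∆ Y p.2) ≤ muStar Ω μ (Y p.1 ∆ Y p.2) :=
            Stmt9Aux.mu_le_muStar hμ hΩ (Stmt9Aux.mem_symmDiff' hΩ (hYΩ _) (hYΩ _))
        _ ≤ muStar Ω μ (Y p.1 ∆ ⋃ i, S i) + muStar Ω μ ((⋃ i, S i) ∆ Y p.2) :=
            Stmt9Aux.muStar_triangle hΩ hμ0 _ _ _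
        _ ≤ 2⁻¹ ^ p.1 + 2⁻¹ ^ p.2 := by
            refine add_le_add (hYS p.1) ?_
            rw [symmDiff_comm]
            exact hYS p.2
    have h1 : Tendsto (fun p : ℕ × ℕ => (2⁻¹ : ℝ≥0∞) ^ p.1) atTop (𝓝 0) := by
      rw [← prod_atTop_atTop_eq]
      exact htendpow.comp tendsto_fst
    have h2 : Tendsto (fun p : ℕ × ℕ => (2⁻¹ : ℝ≥0∞) ^ p.2) atTop (𝓝 0) := by
      rw [← prod_atTop_atTop_eq]
      exact htendpow.comp tendsto_snd
    have hzero : Tendsto (fun p : ℕ × ℕ => (2⁻¹ : ℝ≥0∞) ^ p.1 + 2⁻¹ ^ p.2) atTop (𝓝 0) := by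
      simpa using h1.add h2
    exact tendsto_of_tendsto_of_tendsto_of_le_of_le tendsto_const_nhds hzero
      (fun p => zero_le) hb
  exact ⟨⟨Y, hcauchy, ⟨N, K, fun L => rfl⟩, htendY⟩, ⟨Y, hcauchy, htendY⟩⟩
end

section
/- (Characterization of measurable sets as limit points of μ-Cauchy sequences.) A subset E ⊆ X is Carathéodory measurable with respect to μ* (i.e., μ*(A) = μ*(A ∩ E) + μ*(A ∩ Eᶜ) for every A ⊆ X) if and only if E ∈ S̃, i.e., there exists a μ-Cauchy sequence {B_n} in Ω with lim_{n→∞} μ*(B_n △ E) = 0. -/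
open Filter Set Topology
open scoped symmDiff ENNReal

namespace Stmt14Aux

open MeasureTheory



variable {X : Type*} {Ω : Set (Set X)} {μ : Set X → ℝ≥0∞}

lemma memUniv (hΩ : IsSetAlgebraOn Ω) : (Set.univ : Set X) ∈ Ω := by
  simpa using hΩ.2.1 ∅ hΩ.1

lemma memInter (hΩ : IsSetAlgebraOn Ω) {A B : Set X} (hA : A ∈ Ω) (hB : B ∈ Ω) :
    A ∩ B ∈ Ω := by
  have := hΩ.2.1 _ (hΩ.2.2 _ (hΩ.2.1 A hA) _ (hΩ.2.1 B hB))
  simpa [Set.compl_union] using this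

lemma memDiff (hΩ : IsSetAlgebraOn Ω) {A B : Set X} (hA : A ∈ Ω) (hB : B ∈ Ω) :
    A \ B ∈ Ω := by
  rw [Set.diff_eq]; exact memInter hΩ hA (hΩ.2.1 B hB)

lemma memSymmDiff (hΩ : IsSetAlgebraOn Ω) {A B : Set X} (hA : A ∈ Ω) (hB : B ∈ Ω) :
    A ∆ B ∈ Ω := by
  rw [Set.symmDiff_def]; exact hΩ.2.2 _ (memDiff hΩ hA hB) _ (memDiff hΩ hB hA)

lemma memBiUnion (hΩ : IsSetAlgebraOn Ω) {C : ℕ → Set X} (hC : ∀ i, C i ∈ Ω) (n : ℕ) :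
    (⋃ i < n, C i) ∈ Ω := by
  induction n with
  | zero => simpa using hΩ.1
  | succ n ih => rw [Set.biUnion_lt_succ]; exact hΩ.2.2 _ ih _ (hC n)

lemma add2 (hΩ : IsSetAlgebraOn Ω) (hμ : IsCountablyAdditiveOn Ω μ)
    {A B : Set X} (hA : A ∈ Ω) (hB : B ∈ Ω) (hd : Disjoint A B) :
    μ (A ∪ B) = μ A + μ B := by
  set f : ℕ → Set X := fun n => if n = 0 then A else if n = 1 then B else ∅ with hf
  have hfΩ : ∀ i, f i ∈ Ω := by
    intro i; simp only [f]; split_ifs <;> first | exact hA | exact hB | exact hΩ.1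
  have hU : (⋃ n, f n) = A ∪ B := by
    apply Set.Subset.antisymm
    · refine Set.iUnion_subset fun n => ?_
      simp only [f]; split_ifs <;> simp
    · apply Set.union_subset
      · simpa [f] using Set.subset_iUnion f 0
      · simpa [f] using Set.subset_iUnion f 1
  have hdis : Pairwise (Function.onFun Disjoint f) := by
    intro i j hij
    simp only [Function.onFun, f]
    split_ifs <;> simp_all <;> first | exact hd | exact hd.symm
  have h := hμ.2 f hfΩ hdis (hU ▸ hΩ.2.2 _ hA _ hB)
  rw [hU] at h
  rw [h, tsum_eq_sum (s := {0, 1}) ?_]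
  · rw [Finset.sum_pair (by norm_num)]
    simp [f]
  · intro n hn
    have h0 : n ≠ 0 := by rintro rfl; simp at hn
    have h1 : n ≠ 1 := by rintro rfl; simp at hn
    simp [f, h0, h1, hμ.1]

lemma monoOmega (hΩ : IsSetAlgebraOn Ω) (hμ : IsCountablyAdditiveOn Ω μ)
    {A B : Set X} (hA : A ∈ Ω) (hB : B ∈ Ω) (hsub : A ⊆ B) : μ A ≤ μ B := by
  have h : μ B = μ A + μ (B \ A) := by
    rw [← add2 hΩ hμ hA (memDiff hΩ hB hA) disjoint_sdiff_self_right,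
      Set.union_diff_cancel hsub]
  rw [h]; exact le_self_add

lemma subaddOmega (hΩ : IsSetAlgebraOn Ω) (hμ : IsCountablyAdditiveOn Ω μ)
    {A : Set X} (hA : A ∈ Ω) {C : ℕ → Set X} (hC : ∀ i, C i ∈ Ω)
    (hcov : A ⊆ ⋃ i, C i) : μ A ≤ ∑' i, μ (C i) := by
  classical
  set D : ℕ → Set X := fun i => (A ∩ C i) \ ⋃ j < i, C j with hD
  have hDΩ : ∀ i, D i ∈ Ω := fun i =>
    memDiff hΩ (memInter hΩ hA (hC i)) (memBiUnion hΩ hC i)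
  have hDsub : ∀ i, D i ⊆ C i := fun i x hx => hx.1.2
  have key : ∀ i j, i < j → Disjoint (D i) (D j) := by
    intro i j hij
    rw [Set.disjoint_left]
    intro x hxi hxj
    exact hxj.2 (Set.mem_biUnion hij hxi.1.2)
  have hDdis : Pairwise (Function.onFun Disjoint D) := by
    intro i j hij
    rcases lt_or_gt_of_ne hij with h | h
    · exact key i j h
    · exact (key j i h).symm
  have hDU : (⋃ i, D i) = A := by
    apply Set.Subset.antisymm (Set.iUnion_subset fun i x hx => hx.1.1)
    intro x hx
    have hex : ∃ i, x ∈ C i := by simpa using hcov hx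
    refine Set.mem_iUnion.2 ⟨Nat.find hex, ⟨hx, Nat.find_spec hex⟩, ?_⟩
    simp only [Set.mem_iUnion, not_exists]
    intro j hj hxj
    exact Nat.find_min hex hj hxj
  have h := hμ.2 D hDΩ hDdis (hDU ▸ hA)
  rw [hDU] at h
  rw [h]
  exact ENNReal.tsum_le_tsum fun i => monoOmega hΩ hμ (hDΩ i) (hC i) (hDsub i)

open Classical in
noncomputable def mExt {X : Type*} (Ω : Set (Set X)) (μ : Set X → ℝ≥0∞) : Set X → ℝ≥0∞ :=
  fun s => if s ∈ Ω then μ s else ⊤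

variable {X : Type*} {Ω : Set (Set X)} {μ : Set X → ℝ≥0∞}

lemma mExt_empty (hΩ : IsSetAlgebraOn Ω) (hμ : IsCountablyAdditiveOn Ω μ) :
    mExt Ω μ ∅ = 0 := by simp [mExt, hΩ.1, hμ.1]

lemma mExt_of_mem {A : Set X} (hA : A ∈ Ω) : mExt Ω μ A = μ A := if_pos hA

noncomputable def nu (hΩ : IsSetAlgebraOn Ω) (hμ : IsCountablyAdditiveOn Ω μ) :
    OuterMeasure X := MeasureTheory.OuterMeasure.ofFunction (mExt Ω μ) (mExt_empty hΩ hμ)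

lemma muStar_eq_nu (hΩ : IsSetAlgebraOn Ω) (hμ : IsCountablyAdditiveOn Ω μ) (A : Set X) :
    muStar Ω μ A = nu hΩ hμ A := by
  have hm_top : ∀ s : Set X, ¬ s ∈ Ω → mExt Ω μ s = ⊤ := fun s hs => if_neg hs
  rw [nu, MeasureTheory.OuterMeasure.ofFunction_eq_iInf_mem (mExt Ω μ) (mExt_empty hΩ hμ)
    (P := (· ∈ Ω)) hm_top A]
  refine iInf_congr fun C => iInf_congr fun hC => iInf_congr fun _ => ?_
  exact tsum_congr fun i => (mExt_of_mem (hC i)).symm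

lemma muStar_mono (hΩ : IsSetAlgebraOn Ω) (hμ : IsCountablyAdditiveOn Ω μ)
    {A B : Set X} (h : A ⊆ B) : muStar Ω μ A ≤ muStar Ω μ B := by
  rw [muStar_eq_nu hΩ hμ, muStar_eq_nu hΩ hμ]
  exact measure_mono h

lemma muStar_union_le (hΩ : IsSetAlgebraOn Ω) (hμ : IsCountablyAdditiveOn Ω μ)
    (A B : Set X) : muStar Ω μ (A ∪ B) ≤ muStar Ω μ A + muStar Ω μ B := by
  rw [muStar_eq_nu hΩ hμ, muStar_eq_nu hΩ hμ, muStar_eq_nu hΩ hμ]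
  exact measure_union_le A B

lemma muStar_le_tsum {A : Set X} {C : ℕ → Set X} (hC : ∀ i, C i ∈ Ω)
    (hcov : A ⊆ ⋃ i, C i) : muStar Ω μ A ≤ ∑' i, μ (C i) :=
  iInf_le_of_le C (iInf_le_of_le hC (iInf_le _ hcov))

lemma muStar_of_mem (hΩ : IsSetAlgebraOn Ω) (hμ : IsCountablyAdditiveOn Ω μ)
    {B : Set X} (hB : B ∈ Ω) : muStar Ω μ B = μ B := by
  apply le_antisymm
  · have h := (muStar_eq_nu hΩ hμ B).le.trans (MeasureTheory.OuterMeasure.ofFunction_le B)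
    rwa [mExt_of_mem hB] at h
  · refine le_iInf fun C => le_iInf fun hC => le_iInf fun hcov => ?_
    exact subaddOmega hΩ hμ hB hC hcov

lemma muStar_carath (hΩ : IsSetAlgebraOn Ω) (hμ : IsCountablyAdditiveOn Ω μ)
    {B : Set X} (hB : B ∈ Ω) (A : Set X) :
    muStar Ω μ A = muStar Ω μ (A ∩ B) + muStar Ω μ (A \ B) := by
  have hcar : ∀ t : Set X, mExt Ω μ (t ∩ B) + mExt Ω μ (t \ B) ≤ mExt Ω μ t := by
    intro t
    by_cases ht : t ∈ Ω
    · rw [mExt_of_mem ht, mExt_of_mem (memInter hΩ ht hB), mExt_of_mem (memDiff hΩ ht hB),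
        ← add2 hΩ hμ (memInter hΩ ht hB) (memDiff hΩ ht hB)
          (Set.disjoint_left.2 fun x hx hx2 => hx2.2 hx.2), Set.inter_union_diff]
    · simp [mExt, ht]
  have h := MeasureTheory.OuterMeasure.ofFunction_caratheodory
    (h₀ := mExt_empty hΩ hμ) hcar
  have h2 := (MeasureTheory.OuterMeasure.isCaratheodory_iff _).1 h A
  rw [muStar_eq_nu hΩ hμ, muStar_eq_nu hΩ hμ, muStar_eq_nu hΩ hμ]
  exact h2


variable {X : Type*} {Ω : Set (Set X)} {μ : Set X → ℝ≥0∞}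

lemma dir_mpr (hΩ : IsSetAlgebraOn Ω) (hμ : IsCountablyAdditiveOn Ω μ) {E : Set X}
    {B : ℕ → Set X} (hBΩ : ∀ n, B n ∈ Ω)
    (hlim : Tendsto (fun n => muStar Ω μ (B n ∆ E)) atTop (𝓝 0)) (A : Set X) :
    muStar Ω μ A = muStar Ω μ (A ∩ E) + muStar Ω μ (A ∩ Eᶜ) := by
  apply le_antisymm
  · calc muStar Ω μ A = muStar Ω μ ((A ∩ E) ∪ (A ∩ Eᶜ)) := by rw [Set.inter_union_compl]
      _ ≤ _ := muStar_union_le hΩ hμ _ _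
  · have key : ∀ n, muStar Ω μ (A ∩ E) + muStar Ω μ (A ∩ Eᶜ)
        ≤ muStar Ω μ A + (muStar Ω μ (B n ∆ E) + muStar Ω μ (B n ∆ E)) := by
      intro n
      have h1 : A ∩ E ⊆ (A ∩ B n) ∪ (B n ∆ E) := by
        intro x hx
        by_cases hxB : x ∈ B n
        · exact Set.mem_union_left _ ⟨hx.1, hxB⟩
        · exact Set.mem_union_right _ (Set.mem_symmDiff.2 (Or.inr ⟨hx.2, hxB⟩))
      have h2 : A ∩ Eᶜ ⊆ (A \ B n) ∪ (B n ∆ E) := by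
        intro x hx
        by_cases hxB : x ∈ B n
        · exact Set.mem_union_right _ (Set.mem_symmDiff.2 (Or.inl ⟨hxB, hx.2⟩))
        · exact Set.mem_union_left _ ⟨hx.1, hxB⟩
      have hc := muStar_carath hΩ hμ (hBΩ n) A
      calc muStar Ω μ (A ∩ E) + muStar Ω μ (A ∩ Eᶜ)
          ≤ (muStar Ω μ (A ∩ B n) + muStar Ω μ (B n ∆ E))
            + (muStar Ω μ (A \ B n) + muStar Ω μ (B n ∆ E)) := by
            refine add_le_add ?_ ?_
            · exact (muStar_mono hΩ hμ h1).trans (muStar_union_le hΩ hμ _ _)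
            · exact (muStar_mono hΩ hμ h2).trans (muStar_union_le hΩ hμ _ _)
        _ = (muStar Ω μ (A ∩ B n) + muStar Ω μ (A \ B n))
            + (muStar Ω μ (B n ∆ E) + muStar Ω μ (B n ∆ E)) := by ring
        _ = muStar Ω μ A + (muStar Ω μ (B n ∆ E) + muStar Ω μ (B n ∆ E)) := by rw [← hc]
    have htend : Tendsto (fun n => muStar Ω μ A
        + (muStar Ω μ (B n ∆ E) + muStar Ω μ (B n ∆ E))) atTop (𝓝 (muStar Ω μ A)) := by
      have h0 : Tendsto (fun _ : ℕ => muStar Ω μ A) atTop (𝓝 (muStar Ω μ A)) :=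
        tendsto_const_nhds
      simpa using h0.add (hlim.add hlim)
    exact ge_of_tendsto' htend key

lemma approx (hΩ : IsSetAlgebraOn Ω) (hμ : IsCountablyAdditiveOn Ω μ)
    (hfin : μ Set.univ ≠ ⊤) {E : Set X}
    (hE : ∀ A, muStar Ω μ A = muStar Ω μ (A ∩ E) + muStar Ω μ (A ∩ Eᶜ))
    {ε : ℝ≥0∞} (hε : 0 < ε) (hεt : ε ≠ ⊤) :
    ∃ B ∈ Ω, muStar Ω μ (B ∆ E) ≤ ε + ε := by
  have hEfin : muStar Ω μ E ≠ ⊤ := by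
    have h := (muStar_mono hΩ hμ (Set.subset_univ E)).trans
      (muStar_of_mem hΩ hμ (memUniv hΩ)).le
    exact ne_top_of_le_ne_top hfin h
  have hlt : muStar Ω μ E < muStar Ω μ E + ε := ENNReal.lt_add_right hEfin hε.ne'
  have h := hlt
  nth_rewrite 1 [muStar] at h
  simp only [iInf_lt_iff] at h
  obtain ⟨C, hC, hcov, hsum⟩ := h
  have ht : muStar Ω μ E + ε < ⊤ :=
    ENNReal.add_lt_top.2 ⟨hEfin.lt_top, hεt.lt_top⟩
  have htot : ∑' i, μ (C i) ≠ ⊤ := (hsum.trans ht).ne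
  have htail := ENNReal.tendsto_sum_nat_add (fun i => μ (C i)) htot
  obtain ⟨N, hN⟩ : ∃ N, ∑' k, μ (C (k + N)) < ε := (htail.eventually_lt_const hε).exists
  refine ⟨⋃ i < N, C i, memBiUnion hΩ hC N, ?_⟩
  have hEB : muStar Ω μ (E \ ⋃ i < N, C i) ≤ ε := by
    have hsub : E \ (⋃ i < N, C i) ⊆ ⋃ k, C (k + N) := by
      intro x hx
      obtain ⟨i, hi⟩ := Set.mem_iUnion.1 (hcov hx.1)
      have hiN : N ≤ i := by
        by_contra hlt'
        exact hx.2 (Set.mem_biUnion (not_le.1 hlt') hi)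
      exact Set.mem_iUnion.2 ⟨i - N, by rwa [Nat.sub_add_cancel hiN]⟩
    exact (muStar_le_tsum (fun k => hC (k + N)) hsub).trans hN.le
  have hBE : muStar Ω μ ((⋃ i < N, C i) \ E) ≤ ε := by
    have hUE := hE (⋃ i, C i)
    rw [Set.inter_eq_right.2 hcov] at hUE
    have hμU : muStar Ω μ (⋃ i, C i) ≤ ∑' i, μ (C i) := muStar_le_tsum hC subset_rfl
    have hlt2 : muStar Ω μ E + muStar Ω μ ((⋃ i, C i) ∩ Eᶜ) < muStar Ω μ E + ε := by
      rw [← hUE]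
      exact hμU.trans_lt hsum
    have hUEc : muStar Ω μ ((⋃ i, C i) ∩ Eᶜ) < ε :=
      (ENNReal.add_lt_add_iff_left hEfin).1 hlt2
    refine le_trans (muStar_mono hΩ hμ ?_) hUEc.le
    intro x hx
    exact ⟨Set.mem_iUnion₂.1 hx.1 |>.elim fun i hi => Set.mem_iUnion.2 ⟨i, hi.2⟩, hx.2⟩
  calc muStar Ω μ ((⋃ i < N, C i) ∆ E)
      ≤ muStar Ω μ ((⋃ i < N, C i) \ E) + muStar Ω μ (E \ ⋃ i < N, C i) := by
        rw [Set.symmDiff_def]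
        exact muStar_union_le hΩ hμ _ _
    _ ≤ ε + ε := add_le_add hBE hEB

lemma dir_mp (hΩ : IsSetAlgebraOn Ω) (hμ : IsCountablyAdditiveOn Ω μ)
    (hfin : μ Set.univ ≠ ⊤) {E : Set X}
    (hE : ∀ A, muStar Ω μ A = muStar Ω μ (A ∩ E) + muStar Ω μ (A ∩ Eᶜ)) :
    ∃ B : ℕ → Set X, ((∀ n, B n ∈ Ω) ∧
        Tendsto (fun p : ℕ × ℕ => μ (B p.1 ∆ B p.2)) atTop (𝓝 0)) ∧
      Tendsto (fun n => muStar Ω μ (B n ∆ E)) atTop (𝓝 0) := by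
  have happrox : ∀ n : ℕ, ∃ B ∈ Ω,
      muStar Ω μ (B ∆ E) ≤ ((n + 1 : ℕ) : ℝ≥0∞)⁻¹ + ((n + 1 : ℕ) : ℝ≥0∞)⁻¹ := by
    intro n
    refine approx hΩ hμ hfin hE ?_ ?_
    · exact ENNReal.inv_pos.2 (ENNReal.natCast_ne_top _)
    · exact ENNReal.inv_ne_top.2 (by exact_mod_cast n.succ_ne_zero)
  choose B hBΩ hBle using happrox
  set g : ℕ → ℝ≥0∞ := fun n => ((n + 1 : ℕ) : ℝ≥0∞)⁻¹ + ((n + 1 : ℕ) : ℝ≥0∞)⁻¹ with hg_def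
  have hg : Tendsto g atTop (𝓝 0) := by
    have h1 : Tendsto (fun n : ℕ => ((n + 1 : ℕ) : ℝ≥0∞)⁻¹) atTop (𝓝 0) :=
      ENNReal.tendsto_inv_nat_nhds_zero.comp (tendsto_add_atTop_nat 1)
    simpa [hg_def] using h1.add h1
  have hSlim : Tendsto (fun n => muStar Ω μ (B n ∆ E)) atTop (𝓝 0) :=
    tendsto_of_tendsto_of_tendsto_of_le_of_le tendsto_const_nhds hg
      (fun n => zero_le) hBle
  refine ⟨B, ⟨hBΩ, ?_⟩, hSlim⟩
  have hbound : ∀ p : ℕ × ℕ, μ (B p.1 ∆ B p.2) ≤ g p.1 + g p.2 := by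
    intro p
    rw [← muStar_of_mem hΩ hμ (memSymmDiff hΩ (hBΩ p.1) (hBΩ p.2))]
    calc muStar Ω μ (B p.1 ∆ B p.2)
        ≤ muStar Ω μ ((B p.1 ∆ E) ∪ (E ∆ B p.2)) :=
          muStar_mono hΩ hμ (symmDiff_triangle _ _ _)
      _ ≤ muStar Ω μ (B p.1 ∆ E) + muStar Ω μ (E ∆ B p.2) := muStar_union_le hΩ hμ _ _
      _ ≤ g p.1 + g p.2 := by
          rw [symmDiff_comm E (B p.2)]
          exact add_le_add (hBle p.1) (hBle p.2)
  have htends : Tendsto (fun p : ℕ × ℕ => g p.1 + g p.2) atTop (𝓝 0) := by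
    rw [← prod_atTop_atTop_eq]
    simpa using (hg.comp tendsto_fst).add (hg.comp tendsto_snd)
  exact tendsto_of_tendsto_of_tendsto_of_le_of_le tendsto_const_nhds htends
    (fun p => zero_le) hbound


end Stmt14Aux

/-- measurable sets are exactly the limit points of μ-Cauchy sequences. -/
theorem stmt14 {X : Type*} (Ω : Set (Set X)) (μ : Set X → ℝ≥0∞)
    (hΩ : IsSetAlgebraOn Ω) (hμ : IsCountablyAdditiveOn Ω μ) (hfin : μ Set.univ ≠ ⊤)
    (E : Set X) :
    (∀ A : Set X, muStar Ω μ A = muStar Ω μ (A ∩ E) + muStar Ω μ (A ∩ Eᶜ)) ↔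
      E ∈ Stilde Ω μ := by
  constructor
  · intro hE
    exact Stmt14Aux.dir_mp hΩ hμ hfin hE
  · rintro ⟨B, ⟨hBΩ, _⟩, hlim⟩ A
    exact Stmt14Aux.dir_mpr hΩ hμ hBΩ hlim A
end
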